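/- arXiv:1207.6595 — 3 statements merged into one kernel-verified Lean document; each statement's English description precedes it below -/
import Mathlib

section
/- For all ordinals β and γ: if β ≤ ℓγ then e(β) ≤ γ, where e(ξ) = −1 + ω^ξ and ℓ is the end-logarithm. -/
/-- The end-logarithm: for ξ > 0 the unique δ with ξ = α + ω^δ; ℓ0 = 0. -/
noncomputable def ell (ξ : Ordinal) : Ordinal :=
  sInf {β : Ordinal | ∃ α : Ordinal, ξ = α + Ordinal.omega0 ^ β}

/-- e(ξ) = −1 + ω^ξ. -/
noncomputable def e (ξ : Ordinal) : Ordinal := Ordinal.omega0 ^ ξ - 1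

open Ordinal in
lemma exists_decomp : ∀ γ : Ordinal, γ ≠ 0 → ∃ δ α : Ordinal, γ = α + omega0 ^ δ := by
  intro γ
  induction γ using Ordinal.induction with
  | h γ IH =>
    intro hγ
    set l := Ordinal.log omega0 γ with hl
    have hpow : omega0 ^ l ≠ 0 := (Ordinal.opow_pos l omega0_pos).ne'
    have hdm : omega0 ^ l * (γ / omega0 ^ l) + γ % omega0 ^ l = γ := Ordinal.div_add_mod _ _
    by_cases hr : γ % omega0 ^ l = 0
    · -- γ = ω^l * q with q a nonzero natural
      have hq : γ / omega0 ^ l < omega0 := by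
        rw [Ordinal.div_lt hpow, ← Ordinal.opow_succ]
        exact Ordinal.lt_opow_succ_log_self one_lt_omega0 γ
      obtain ⟨n, hn⟩ := Ordinal.lt_omega0.1 hq
      have hn0 : n ≠ 0 := by
        rintro rfl
        simp only [Nat.cast_zero] at hn
        rw [hn, mul_zero, zero_add] at hdm
        exact hγ (by rw [← hdm, hr])
      obtain ⟨m, rfl⟩ := Nat.exists_eq_succ_of_ne_zero hn0
      refine ⟨l, omega0 ^ l * m, ?_⟩
      rw [← hdm, hr, add_zero, hn]
      push_cast
      rw [mul_add, mul_one]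
    · have hrlt : γ % omega0 ^ l < γ :=
        lt_of_lt_of_le (Ordinal.mod_lt γ hpow) (Ordinal.opow_log_le_self omega0 hγ)
      obtain ⟨δ, α, hδα⟩ := IH _ hrlt hr
      exact ⟨δ, omega0 ^ l * (γ / omega0 ^ l) + α, by rw [add_assoc, ← hδα, hdm]⟩

/-- If β ≤ ℓ γ then e β ≤ γ. -/
theorem e_le_of_le_ell (β γ : Ordinal) (h : β ≤ ell γ) : e β ≤ γ := by
  by_cases hγ : γ = 0
  · subst hγ
    have hempty : {β : Ordinal | ∃ α : Ordinal, (0 : Ordinal) = α + Ordinal.omega0 ^ β} = ∅ := by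
      ext x
      simp only [Set.mem_setOf_eq, Set.mem_empty_iff_false, iff_false]
      rintro ⟨α, hα⟩
      have : (0 : Ordinal) < α + Ordinal.omega0 ^ x :=
        lt_of_lt_of_le (Ordinal.opow_pos x Ordinal.omega0_pos) le_add_self
      exact absurd hα.symm this.ne'
    rw [ell, hempty, Ordinal.sInf_empty] at h
    have hβ : β = 0 := le_antisymm (by simpa using h) (zero_le (a := β))
    subst hβ
    simp [e, Ordinal.opow_zero]
  · obtain ⟨δ, α, hδα⟩ := exists_decomp γ hγ
    have hne : {β : Ordinal | ∃ α : Ordinal, γ = α + Ordinal.omega0 ^ β}.Nonempty := ⟨δ, α, hδα⟩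
    obtain ⟨α', hα'⟩ := csInf_mem hne
    calc e β ≤ Ordinal.omega0 ^ β := Ordinal.sub_le_self _ _
      _ ≤ Ordinal.omega0 ^ ell γ := Ordinal.opow_le_opow_right Ordinal.omega0_pos h
      _ ≤ γ := by
        conv_rhs => rw [hα']
        exact le_add_self
end

section
/- Let X be a scattered topological space with rank function ρ_X, and let Θ be an ordinal equipped with the initial segment topology (opens = downward closed sets). If f : X → Θ is a d-map (continuous, open, pointwise discrete), then f equals the rank function ρ_X. -/
/-- Derived set (set of limit points) of `A`. -/
def derivSet {X : Type*} [TopologicalSpace X] (A : Set X) : Set X :=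
  {x | ∀ U : Set X, IsOpen U → x ∈ U → ∃ y, y ∈ U ∩ A ∧ y ≠ x}

/-- Iterated Cantor-Bendixson derivative `d^o A`. -/
noncomputable def CBd {X : Type*} [TopologicalSpace X] (A : Set X) (o : Ordinal) : Set X :=
  Ordinal.limitRecOn o A (fun _ ih => derivSet ih)
    (fun o _ ih => ⋂ b : Set.Iio o, ih b.1 b.2)

/-- Cantor-Bendixson rank of a point: least α with x ∉ d^{α+1} X. -/
noncomputable def rank {X : Type*} [TopologicalSpace X] (x : X) : Ordinal :=
  sInf {α : Ordinal | x ∉ CBd (Set.univ : Set X) (α + 1)}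

/-- A space is scattered if every nonempty subset has an isolated point. -/
def Scattered (X : Type*) [TopologicalSpace X] : Prop :=
  ∀ A : Set X, A.Nonempty → ∃ x ∈ A, ∃ U : Set X, IsOpen U ∧ U ∩ A = {x}

/-- A map is pointwise discrete if each of its point-fibers is a discrete subspace. -/
def PointwiseDiscrete {X Y : Type*} [TopologicalSpace X] [TopologicalSpace Y]
    (f : X → Y) : Prop :=
  ∀ y : Y, DiscreteTopology (f ⁻¹' {y})

lemma CBd_zero {X : Type*} [TopologicalSpace X] (A : Set X) : CBd A 0 = A :=
  Ordinal.limitRecOn_zero _ _ _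

lemma CBd_succ {X : Type*} [TopologicalSpace X] (A : Set X) (o : Ordinal) :
    CBd A (o + 1) = derivSet (CBd A o) := by
  have : o + 1 = Order.succ o := (Ordinal.add_one_eq_succ o)
  rw [this]
  exact Ordinal.limitRecOn_succ _ _ _ _

lemma CBd_limit {X : Type*} [TopologicalSpace X] (A : Set X) (o : Ordinal) (ho : Order.IsSuccLimit o) :
    CBd A o = ⋂ b : Set.Iio o, CBd A b.1 :=
  Ordinal.limitRecOn_limit _ _ _ _ ho

lemma CBd_eq {X : Type*} [TopologicalSpace X]
    (Θ : Ordinal) (f : X → {x : Ordinal // x < Θ})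
    (hcont : ∀ U : Set {x : Ordinal // x < Θ}, IsLowerSet U → IsOpen (f ⁻¹' U))
    (hopen : ∀ U : Set X, IsOpen U → IsLowerSet (f '' U))
    (hpd : ∀ y : {x : Ordinal // x < Θ}, DiscreteTopology (f ⁻¹' {y})) (α : Ordinal) :
    CBd (Set.univ : Set X) α = f ⁻¹' {y | α ≤ y.1} := by
  induction α using Ordinal.limitRecOn with
  | zero =>
    rw [CBd_zero]
    ext x; simp [zero_le]
  | add_one o ih =>
    rw [CBd_succ, ih]
    ext x
    simp only [derivSet, Set.mem_setOf_eq, Set.mem_preimage, Ordinal.add_one_eq_succ,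
      Order.succ_le_iff]
    constructor
    · intro hx
      by_contra hno
      push_neg at hno
      rcases lt_or_eq_of_le hno with h1 | h1
      · -- f x < o : contradiction with limit point
        have hL : IsLowerSet {y : {x : Ordinal // x < Θ} | y.1 < o} := by
          intro a b hba ha
          exact lt_of_le_of_lt (Subtype.coe_le_coe.mpr hba) ha
        have hU := hcont _ hL
        obtain ⟨y, ⟨hy1, hy2⟩, _⟩ := hx _ hU (by simpa using h1)
        simp only [Set.mem_preimage, Set.mem_setOf_eq] at hy1 hy2
        exact absurd hy2 (not_le.mpr hy1)
      · -- f x = o : use discreteness of the fiber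
        have hd := hpd (f x)
        have hsing : IsOpen ({⟨x, rfl⟩} : Set (f ⁻¹' {f x})) := isOpen_discrete _
        rw [isOpen_induced_iff] at hsing
        obtain ⟨V, hVopen, hVeq⟩ := hsing
        have hxV : x ∈ V := by
          have : (⟨x, rfl⟩ : f ⁻¹' {f x}) ∈ (Subtype.val ⁻¹' V : Set (f ⁻¹' {f x})) := by
            rw [hVeq]; rfl
          exact this
        have hL : IsLowerSet {y : {x : Ordinal // x < Θ} | y ≤ f x} := fun a b hba ha =>
          le_trans hba ha
        have hW := hcont _ hL
        have hUopen : IsOpen (V ∩ f ⁻¹' {y | y ≤ f x}) := hVopen.inter hW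
        obtain ⟨y, ⟨⟨hyV, hyW⟩, hyA⟩, hyne⟩ := hx _ hUopen ⟨hxV, Set.mem_preimage.mpr (Set.mem_setOf_eq ▸ le_rfl)⟩
        -- f y = f x
        have hfy : f y = f x := by
          apply le_antisymm hyW
          rw [← Subtype.coe_le_coe, h1]
          exact hyA
        have : (⟨y, hfy⟩ : f ⁻¹' {f x}) ∈ (Subtype.val ⁻¹' V : Set (f ⁻¹' {f x})) := hyV
        rw [hVeq] at this
        exact hyne (congrArg Subtype.val (Set.mem_singleton_iff.mp this))
    · intro ho U hU hxU
      have hoΘ : o < Θ := lt_trans ho (f x).2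
      have : (⟨o, hoΘ⟩ : {x : Ordinal // x < Θ}) ∈ f '' U :=
        hopen U hU (Subtype.coe_le_coe.mp (le_of_lt ho)) ⟨x, hxU, rfl⟩
      obtain ⟨z, hzU, hz⟩ := this
      refine ⟨z, ⟨hzU, Set.mem_preimage.mpr (by rw [hz]; exact Set.mem_setOf_eq ▸ le_rfl)⟩, ?_⟩
      intro h
      rw [← h, hz] at ho
      exact lt_irrefl _ ho
  | limit o ho ih =>
    rw [CBd_limit _ _ ho]
    ext x
    simp only [Set.mem_iInter, Set.mem_preimage, Set.mem_setOf_eq]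
    constructor
    · intro h
      rw [ho.le_iff_forall_le]
      intro b hb
      have := h ⟨b, hb⟩
      rw [ih b hb] at this
      exact this
    · intro h b
      rw [ih b.1 b.2]
      exact le_trans (le_of_lt b.2) h

theorem rank_eq {X : Type*} [TopologicalSpace X]
    (Θ : Ordinal) (f : X → {x : Ordinal // x < Θ})
    (hcont : ∀ U : Set {x : Ordinal // x < Θ}, IsLowerSet U → IsOpen (f ⁻¹' U))
    (hopen : ∀ U : Set X, IsOpen U → IsLowerSet (f '' U))
    (hpd : ∀ y : {x : Ordinal // x < Θ}, DiscreteTopology (f ⁻¹' {y})) (x : X) :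
    ((f x : Ordinal)) = sInf {α : Ordinal | x ∉ CBd (Set.univ : Set X) (α + 1)} := by
  have key := CBd_eq Θ f hcont hopen hpd
  have hS : {α : Ordinal | x ∉ CBd (Set.univ : Set X) (α + 1)} = Set.Ici ((f x : Ordinal)) := by
    ext α
    rw [Set.mem_setOf_eq, key (α + 1)]
    simp only [Set.mem_preimage, Set.mem_setOf_eq, Set.mem_Ici, not_le,
      Ordinal.add_one_eq_succ, Order.succ_le_iff, not_lt]
  rw [hS, csInf_Ici]

/-- Any d-map from a scattered space into an ordinal Θ with the initial segment
topology (opens = downward-closed sets) is the rank function. Continuity and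
openness with respect to the initial segment topology are expressed via lower sets. -/
theorem dmap_to_initial_segment_eq_rank {X : Type*} [TopologicalSpace X]
    (hX : Scattered X) (Θ : Ordinal) (f : X → {x : Ordinal // x < Θ})
    (hcont : ∀ U : Set {x : Ordinal // x < Θ}, IsLowerSet U → IsOpen (f ⁻¹' U))
    (hopen : ∀ U : Set X, IsOpen U → IsLowerSet (f '' U))
    (hpd : ∀ y : {x : Ordinal // x < Θ}, DiscreteTopology (f ⁻¹' {y})) :
    ∀ x : X, (f x : Ordinal) = rank x := by
  intro x
  rw [rank]
  exact rank_eq Θ f hcont hopen hpd x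
end

section
/- Let X = ⟨X, (T_ξ)_{ξ<λ}⟩ and Y = ⟨Y, (S_ξ)_{ξ<λ}⟩ be families of topologies indexed by a limit ordinal λ, both increasing in ξ. If f : X → Y is a d-map from (X, T_ξ) to (Y, S_ξ) for every ξ < λ, then f is a d-map from (X, ⨆_{ξ<λ} T_ξ) to (Y, ⨆_{ξ<λ} S_ξ), where ⨆ denotes the join (supremum) of topologies. -/
/-- Pointwise discreteness of `f` with respect to an explicit topology `t` on the domain:
every fiber is discrete in the topology induced from `t`. -/
def PointwiseDiscreteT {X Y : Type*} (t : TopologicalSpace X) (f : X → Y) : Prop :=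
  ∀ y : Y, @DiscreteTopology (f ⁻¹' {y}) (TopologicalSpace.induced Subtype.val t)

/-- If `f` is a d-map `(X, T_ξ) → (Y, S_ξ)` for each ξ below a limit ordinal λ, with both
families of topologies increasing, then `f` is a d-map between the join topologies.
(`⨅` in Mathlib's order on topologies is the join: the least topology containing all
the given ones.) -/
theorem dmap_join {X Y : Type*} (l : Ordinal) (hl : Order.IsSuccLimit l)
    (T : ∀ ξ : Ordinal, ξ < l → TopologicalSpace X)
    (S : ∀ ξ : Ordinal, ξ < l → TopologicalSpace Y)
    (hT : ∀ (ξ ζ : Ordinal) (hξ : ξ < l) (hζ : ζ < l), ξ ≤ ζ →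
      ∀ U : Set X, (T ξ hξ).IsOpen U → (T ζ hζ).IsOpen U)
    (hS : ∀ (ξ ζ : Ordinal) (hξ : ξ < l) (hζ : ζ < l), ξ ≤ ζ →
      ∀ U : Set Y, (S ξ hξ).IsOpen U → (S ζ hζ).IsOpen U)
    (f : X → Y)
    (hd : ∀ (ξ : Ordinal) (hξ : ξ < l),
      @Continuous X Y (T ξ hξ) (S ξ hξ) f ∧
      @IsOpenMap X Y (T ξ hξ) (S ξ hξ) f ∧
      PointwiseDiscreteT (T ξ hξ) f) :
    @Continuous X Y (⨅ b : Set.Iio l, T b.1 b.2) (⨅ b : Set.Iio l, S b.1 b.2) f ∧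
    @IsOpenMap X Y (⨅ b : Set.Iio l, T b.1 b.2) (⨅ b : Set.Iio l, S b.1 b.2) f ∧
    PointwiseDiscreteT (⨅ b : Set.Iio l, T b.1 b.2) f := by
  have h0 : (0 : Ordinal) < l := hl.pos
  refine ⟨?_, ?_, ?_⟩
  · exact continuous_iInf_rng.2 fun b => continuous_iInf_dom (hd b.1 b.2).1
  · intro U hU
    rw [@isOpen_iff_mem_nhds Y (⨅ b : Set.Iio l, S b.1 b.2) (f '' U)]
    rintro y ⟨x, hxU, rfl⟩
    -- U is a nbhd of x in the inf topology; use directedness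
    have hdir : Directed (· ≥ ·) (fun b : Set.Iio l => @nhds X (T b.1 b.2) x) := by
      rintro ⟨b, hb⟩ ⟨c, hc⟩
      refine ⟨⟨max b c, Set.mem_Iio.mpr (max_lt hb hc)⟩, ?_, ?_⟩
      · exact @nhds_mono X _ _ x fun V hV => hT b (max b c) hb (max_lt hb hc) (le_max_left _ _) V hV
      · exact @nhds_mono X _ _ x fun V hV => hT c (max b c) hc (max_lt hb hc) (le_max_right _ _) V hV
    have hne : Nonempty (Set.Iio l) := ⟨⟨0, h0⟩⟩
    have hmem : U ∈ ⨅ b : Set.Iio l, @nhds X (T b.1 b.2) x := by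
      rw [← @nhds_iInf X (Set.Iio l) (fun b : Set.Iio l => T b.1 b.2) x]
      exact (@isOpen_iff_mem_nhds X (⨅ b : Set.Iio l, T b.1 b.2) U).1 hU x hxU
    rw [Filter.mem_iInf_of_directed hdir] at hmem
    obtain ⟨⟨b, hb⟩, hUb⟩ := hmem
    obtain ⟨V, hVU, hVopen, hxV⟩ := (@mem_nhds_iff X (T b hb) x U).1 hUb
    have hfV : (⨅ b : Set.Iio l, S b.1 b.2).IsOpen (f '' V) := by
      have := (hd b hb).2.1 V hVopen
      exact (iInf_le (fun b : Set.Iio l => S b.1 b.2) ⟨b, hb⟩ : _ ≤ S b hb) _ this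
    exact Filter.mem_of_superset (@IsOpen.mem_nhds Y (⨅ b : Set.Iio l, S b.1 b.2) (f x) (f '' V) hfV ⟨x, hxV, rfl⟩)
      (Set.image_mono hVU)
  · unfold PointwiseDiscreteT
    intro y
    have hdisc := (hd 0 h0).2.2 y
    have hle : (⨅ b : Set.Iio l, T b.1 b.2) ≤ T 0 h0 :=
      iInf_le (fun b : Set.Iio l => T b.1 b.2) ⟨0, h0⟩
    have hle' : TopologicalSpace.induced (Subtype.val : f ⁻¹' {y} → X)
        (⨅ b : Set.Iio l, T b.1 b.2) ≤
        TopologicalSpace.induced Subtype.val (T 0 h0) := induced_mono hle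
    have hbot := @DiscreteTopology.eq_bot (f ⁻¹' {y}) (TopologicalSpace.induced Subtype.val (T 0 h0)) hdisc
    exact @DiscreteTopology.mk (f ⁻¹' {y})
      (TopologicalSpace.induced (Subtype.val : f ⁻¹' {y} → X) (⨅ b : Set.Iio l, T b.1 b.2))
      (le_bot_iff.1 (hle'.trans (le_of_eq hbot)))
end
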